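/- Let m : Σ → X be a countably additive vector measure, and let (P_η) be a net of bounded linear operators P_η : X → X with ‖P_η‖ ≤ 1 for all η, converging pointwise (in the strong operator topology) to the identity on X. Set m_η := P_η ∘ m. Then every m-integrable function f is m_η-integrable and lim_η ‖f‖_{L¹(m_η)} = ‖f‖_{L¹(m)} for all f ∈ L¹(m). -/

import Mathlib

open MeasureTheory Filter
open scoped ENNReal

noncomputable def scal {Ω : Type*} [MeasurableSpace Ω] {X : Type*} [NormedAddCommGroup X]
    [NormedSpace ℝ X] (m : VectorMeasure Ω X) (x : X →L[ℝ] ℝ) : SignedMeasure Ω :=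
  m.mapRange x.toLinearMap.toAddMonoidHom x.continuous

noncomputable def sint {Ω : Type*} [MeasurableSpace Ω] (s : SignedMeasure Ω) (f : Ω → ℝ) : ℝ :=
  ∫ ω, f ω ∂s.toJordanDecomposition.posPart - ∫ ω, f ω ∂s.toJordanDecomposition.negPart

open Classical in
noncomputable def hS {Ω : Type*} (A : Set Ω) : Ω → ℝ := fun ω => if ω ∈ A then (1 : ℝ) else -1

/-- The scalar part of `m`-integrability: integrable w.r.t. every scalarization. -/
def MemL1 {Ω : Type*} [MeasurableSpace Ω] {X : Type*} [NormedAddCommGroup X]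
    [NormedSpace ℝ X] (m : VectorMeasure Ω X) (f : Ω → ℝ) : Prop :=
  ∀ x : X →L[ℝ] ℝ, Integrable f (scal m x).totalVariation

noncomputable def l1norm {Ω : Type*} [MeasurableSpace Ω] {X : Type*} [NormedAddCommGroup X]
    [NormedSpace ℝ X] (m : VectorMeasure Ω X) (f : Ω → ℝ) : ℝ :=
  ⨆ x : {x : X →L[ℝ] ℝ // ‖x‖ ≤ 1}, ∫ ω, |f ω| ∂(scal m x.1).totalVariation

/-- Composition of a vector measure with a continuous linear map. -/
noncomputable def compVM {Ω X Y : Type*} [MeasurableSpace Ω] [NormedAddCommGroup X]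
    [NormedSpace ℝ X] [NormedAddCommGroup Y] [NormedSpace ℝ Y]
    (T : X →L[ℝ] Y) (m : VectorMeasure Ω X) : VectorMeasure Ω Y :=
  m.mapRange T.toLinearMap.toAddMonoidHom T.continuous

section Aux

variable {Ω X : Type*} [MeasurableSpace Ω] [NormedAddCommGroup X] [NormedSpace ℝ X]

instance totalVariation_isFiniteMeasure (ν : SignedMeasure Ω) :
    IsFiniteMeasure ν.totalVariation := by
  unfold SignedMeasure.totalVariation
  infer_instance

lemma scal_apply (m : VectorMeasure Ω X) (y : X →L[ℝ] ℝ) (A : Set Ω) :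
    scal m y A = y (m A) :=
  VectorMeasure.mapRange_apply _ _

lemma scal_compVM (T : X →L[ℝ] X) (m : VectorMeasure Ω X) (y : X →L[ℝ] ℝ) :
    scal (compVM T m) y = scal m (y.comp T) := by
  ext A hA
  rw [scal_apply, scal_apply]
  rw [show (compVM T m) A = T (m A) from VectorMeasure.mapRange_apply _ _]
  rfl

/-- The elementary integral of a simple function against a vector measure. -/
noncomputable def vmint (m : VectorMeasure Ω X) (s : SimpleFunc Ω ℝ) : X :=
  ∑ c ∈ s.range, c • m (s ⁻¹' {c})

lemma vmint_comp (T : X →L[ℝ] X) (m : VectorMeasure Ω X) (s : SimpleFunc Ω ℝ) :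
    vmint (compVM T m) s = T (vmint m s) := by
  rw [vmint, vmint, map_sum]
  refine Finset.sum_congr rfl fun c _ => ?_
  rw [show (compVM T m) (s ⁻¹' {c}) = T (m (s ⁻¹' {c})) from VectorMeasure.mapRange_apply _ _,
    ContinuousLinearMap.map_smul]

lemma vmint_pair (m : VectorMeasure Ω X) (y : X →L[ℝ] ℝ) (s : SimpleFunc Ω ℝ) :
    y (vmint m s) =
      s.integral (scal m y).toJordanDecomposition.posPart -
        s.integral (scal m y).toJordanDecomposition.negPart := by
  set ν := scal m y with hνdef
  have hν : ∀ A : Set Ω, MeasurableSet A →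
      y (m A) = (ν.toJordanDecomposition.posPart A).toReal
        - (ν.toJordanDecomposition.negPart A).toReal := by
    intro A hA
    have h1 : ν A = y (m A) := scal_apply m y A
    rw [← h1]
    conv_lhs => rw [← ν.toSignedMeasure_toJordanDecomposition]
    rw [JordanDecomposition.toSignedMeasure, VectorMeasure.sub_apply,
      Measure.toSignedMeasure_apply_measurable hA,
      Measure.toSignedMeasure_apply_measurable hA]
    rfl
  rw [vmint, map_sum, SimpleFunc.integral_eq, SimpleFunc.integral_eq,
    ← Finset.sum_sub_distrib]
  refine Finset.sum_congr rfl fun c _ => ?_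
  rw [ContinuousLinearMap.map_smul, smul_eq_mul, hν _ (s.measurableSet_fiber c),
    smul_eq_mul, smul_eq_mul]
  unfold Measure.real
  ring

lemma vmint_abs_le (m : VectorMeasure Ω X) (y : X →L[ℝ] ℝ) {f : Ω → ℝ}
    (hf : Integrable f (scal m y).totalVariation)
    (s : SimpleFunc Ω ℝ) (hs : ∀ ω, |s ω| ≤ |f ω|) :
    |y (vmint m s)| ≤ ∫ ω, |f ω| ∂(scal m y).totalVariation := by
  set j := (scal m y).toJordanDecomposition with hj
  have htv : (scal m y).totalVariation = j.posPart + j.negPart := rfl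
  have hip : Integrable s j.posPart := s.integrable_of_isFiniteMeasure
  have hin : Integrable s j.negPart := s.integrable_of_isFiniteMeasure
  have hitv : Integrable s (scal m y).totalVariation := s.integrable_of_isFiniteMeasure
  rw [vmint_pair, SimpleFunc.integral_eq_integral _ hip, SimpleFunc.integral_eq_integral _ hin]
  have h1 : |∫ ω, s ω ∂j.posPart| ≤ ∫ ω, |s ω| ∂j.posPart := by
    simpa [Real.norm_eq_abs] using norm_integral_le_integral_norm (μ := j.posPart) (f := ⇑s)
  have h2 : |∫ ω, s ω ∂j.negPart| ≤ ∫ ω, |s ω| ∂j.negPart := by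
    simpa [Real.norm_eq_abs] using norm_integral_le_integral_norm (μ := j.negPart) (f := ⇑s)
  have h3 : ∫ ω, |s ω| ∂j.posPart + ∫ ω, |s ω| ∂j.negPart
      = ∫ ω, |s ω| ∂(scal m y).totalVariation := by
    rw [htv, integral_add_measure hip.abs hin.abs]
  have h4 : ∫ ω, |s ω| ∂(scal m y).totalVariation ≤ ∫ ω, |f ω| ∂(scal m y).totalVariation :=
    integral_mono hitv.abs hf.abs hs
  calc |∫ ω, s ω ∂j.posPart - ∫ ω, s ω ∂j.negPart|
      ≤ |∫ ω, s ω ∂j.posPart| + |∫ ω, s ω ∂j.negPart| := abs_sub _ _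
    _ ≤ ∫ ω, |s ω| ∂j.posPart + ∫ ω, |s ω| ∂j.negPart := add_le_add h1 h2
    _ = ∫ ω, |s ω| ∂(scal m y).totalVariation := h3
    _ ≤ ∫ ω, |f ω| ∂(scal m y).totalVariation := h4

lemma vmint_approx (m : VectorMeasure Ω X) (y : X →L[ℝ] ℝ) {f : Ω → ℝ}
    (hf : Integrable f (scal m y).totalVariation) {ε : ℝ} (hε : 0 < ε) :
    ∃ s : SimpleFunc Ω ℝ, (∀ ω, |s ω| ≤ |f ω|) ∧
      (∫ ω, |f ω| ∂(scal m y).totalVariation) - ε < y (vmint m s) := by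
  classical
  set ν := scal m y with hνdef
  set j := ν.toJordanDecomposition with hj
  have htv : ν.totalVariation = j.posPart + j.negPart := rfl
  set g := hf.1.mk f with hgdef
  have hg : StronglyMeasurable g := hf.1.stronglyMeasurable_mk
  have hfg : f =ᵐ[ν.totalVariation] g := hf.1.ae_eq_mk
  have hgint : Integrable g ν.totalVariation := hf.congr hfg
  have hgp : Integrable g j.posPart := by
    refine hgint.mono_measure ?_
    rw [htv]; exact Measure.le_add_right le_rfl
  have hgn : Integrable g j.negPart := by
    refine hgint.mono_measure ?_
    rw [htv]; exact Measure.le_add_left le_rfl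
  obtain ⟨N, hNsub, hNmeas, hNnull⟩ := exists_measurable_superset_of_null (ae_iff.mp hfg)
  have hNp : j.posPart N = 0 := by
    have := hNnull
    rw [htv, Measure.add_apply, add_eq_zero] at this
    exact this.1
  have hNn : j.negPart N = 0 := by
    have := hNnull
    rw [htv, Measure.add_apply, add_eq_zero] at this
    exact this.2
  obtain ⟨S₀, hS₀meas, hpS₀, hnS₀⟩ := j.mutuallySingular
  set u : Ω → ℝ≥0∞ := fun ω => ENNReal.ofReal |g ω| with hu
  have humeas : Measurable u := hg.measurable.abs.ennreal_ofReal
  set base : ℕ → SimpleFunc Ω ℝ := fun n => (SimpleFunc.eapprox u n).map ENNReal.toReal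
    with hbase
  set sfn : ℕ → SimpleFunc Ω ℝ := fun n =>
    SimpleFunc.piecewise N hNmeas 0
      (SimpleFunc.piecewise S₀ᶜ hS₀meas.compl (base n) (-(base n))) with hsfn
  have hbnonneg : ∀ n ω, 0 ≤ base n ω := by
    intro n ω
    rw [hbase]
    simp only [SimpleFunc.map_apply]
    exact ENNReal.toReal_nonneg
  have hble : ∀ n ω, base n ω ≤ |g ω| := by
    intro n ω
    have h1 : SimpleFunc.eapprox u n ω ≤ u ω := by
      conv_rhs => rw [← SimpleFunc.iSup_eapprox_apply humeas ω]
      exact le_iSup (fun k => SimpleFunc.eapprox u k ω) n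
    have h2 : (SimpleFunc.eapprox u n ω).toReal ≤ (u ω).toReal :=
      ENNReal.toReal_mono (by rw [hu]; exact ENNReal.ofReal_ne_top) h1
    rw [hbase]
    simp only [SimpleFunc.map_apply]
    calc (SimpleFunc.eapprox u n ω).toReal ≤ (u ω).toReal := h2
      _ = |g ω| := by rw [hu]; exact ENNReal.toReal_ofReal (abs_nonneg _)
  have hsfn_apply : ∀ n ω, sfn n ω =
      if ω ∈ N then 0 else (if ω ∈ S₀ᶜ then base n ω else -(base n ω)) := by
    intro n ω
    rw [hsfn]
    simp only [SimpleFunc.piecewise_apply, SimpleFunc.coe_zero, Pi.zero_apply]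
    by_cases hωN : ω ∈ N
    · simp [hωN]
    · by_cases hωP : ω ∈ S₀ᶜ <;> simp [hωN, hωP]
  have habsg : ∀ n ω, |sfn n ω| ≤ |g ω| := by
    intro n ω
    rw [hsfn_apply]
    by_cases hωN : ω ∈ N
    · simp [hωN, abs_nonneg]
    · rw [if_neg hωN]
      by_cases hωP : ω ∈ S₀ᶜ
      · rw [if_pos hωP, abs_of_nonneg (hbnonneg n ω)]
        exact hble n ω
      · rw [if_neg hωP, abs_neg, abs_of_nonneg (hbnonneg n ω)]
        exact hble n ω
  have habs : ∀ n ω, |sfn n ω| ≤ |f ω| := by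
    intro n ω
    by_cases hωN : ω ∈ N
    · rw [hsfn_apply, if_pos hωN]
      simp [abs_nonneg]
    · have hfgω : f ω = g ω := by
        by_contra h
        exact hωN (hNsub h)
      rw [hfgω]
      exact habsg n ω
  have hbconv : ∀ ω, Tendsto (fun n => base n ω) atTop (nhds |g ω|) := by
    intro ω
    have h1 : Tendsto (fun n => SimpleFunc.eapprox u n ω) atTop (nhds (u ω)) := by
      conv in nhds (u ω) => rw [← SimpleFunc.iSup_eapprox_apply humeas ω]
      exact tendsto_atTop_iSup (fun a b hab => SimpleFunc.monotone_eapprox u hab ω)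
    have hne : u ω ≠ ⊤ := by rw [hu]; exact ENNReal.ofReal_ne_top
    have h2 := (ENNReal.tendsto_toReal hne).comp h1
    have h3 : (u ω).toReal = |g ω| := by rw [hu]; exact ENNReal.toReal_ofReal (abs_nonneg _)
    rw [hbase]
    simpa only [SimpleFunc.map_apply, Function.comp_def, h3] using h2
  -- dominated convergence on the positive part
  have hDCp : Tendsto (fun n => ∫ ω, sfn n ω ∂j.posPart) atTop
      (nhds (∫ ω, |g ω| ∂j.posPart)) := by
    refine tendsto_integral_of_dominated_convergence (fun ω => |g ω|)
      (fun n => (sfn n).aestronglyMeasurable) hgp.abs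
      (fun n => Eventually.of_forall fun ω => by
        rw [Real.norm_eq_abs]; exact habsg n ω) ?_
    have hnull : j.posPart (N ∪ S₀) = 0 :=
      measure_union_null hNp hpS₀
    have hae : ∀ᵐ ω ∂j.posPart, ω ∈ (N ∪ S₀)ᶜ := compl_mem_ae_iff.2 hnull
    filter_upwards [hae] with ω hω
    have hωN : ω ∉ N := fun h => hω (Or.inl h)
    have hωS : ω ∈ S₀ᶜ := fun h => hω (Or.inr h)
    have heq : (fun n => sfn n ω) = fun n => base n ω := by
      funext n
      rw [hsfn_apply, if_neg hωN, if_pos hωS]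
    rw [heq]
    exact hbconv ω
  -- dominated convergence on the negative part
  have hDCn : Tendsto (fun n => ∫ ω, sfn n ω ∂j.negPart) atTop
      (nhds (∫ ω, -|g ω| ∂j.negPart)) := by
    refine tendsto_integral_of_dominated_convergence (fun ω => |g ω|)
      (fun n => (sfn n).aestronglyMeasurable) hgn.abs
      (fun n => Eventually.of_forall fun ω => by
        rw [Real.norm_eq_abs]; exact habsg n ω) ?_
    have hnull : j.negPart (N ∪ S₀ᶜ) = 0 :=
      measure_union_null hNn hnS₀
    have hae : ∀ᵐ ω ∂j.negPart, ω ∈ (N ∪ S₀ᶜ)ᶜ := compl_mem_ae_iff.2 hnull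
    filter_upwards [hae] with ω hω
    have hωN : ω ∉ N := fun h => hω (Or.inl h)
    have hωS : ω ∉ S₀ᶜ := fun h => hω (Or.inr h)
    have heq : (fun n => sfn n ω) = fun n => -(base n ω) := by
      funext n
      rw [hsfn_apply, if_neg hωN, if_neg hωS]
    rw [heq]
    exact (hbconv ω).neg
  have hsum : ∫ ω, |f ω| ∂ν.totalVariation
      = ∫ ω, |g ω| ∂j.posPart - ∫ ω, -|g ω| ∂j.negPart := by
    have h0 : ∫ ω, |f ω| ∂ν.totalVariation = ∫ ω, |g ω| ∂ν.totalVariation :=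
      integral_congr_ae (hfg.fun_comp abs)
    rw [h0, htv, integral_add_measure hgp.abs hgn.abs, integral_neg, sub_neg_eq_add]
  have hkey : Tendsto (fun n => y (vmint m (sfn n))) atTop
      (nhds (∫ ω, |f ω| ∂ν.totalVariation)) := by
    have h1 : ∀ n, y (vmint m (sfn n))
        = ∫ ω, sfn n ω ∂j.posPart - ∫ ω, sfn n ω ∂j.negPart := by
      intro n
      rw [vmint_pair,
        SimpleFunc.integral_eq_integral _ ((sfn n).integrable_of_isFiniteMeasure),
        SimpleFunc.integral_eq_integral _ ((sfn n).integrable_of_isFiniteMeasure)]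
    simp only [h1, hsum]
    exact hDCp.sub hDCn
  have hlt : (∫ ω, |f ω| ∂ν.totalVariation) - ε < ∫ ω, |f ω| ∂ν.totalVariation :=
    sub_lt_self _ hε
  obtain ⟨n, hn⟩ := (hkey.eventually (eventually_gt_nhds hlt)).exists
  exact ⟨sfn n, habs n, hn⟩

end Aux

/-- if `(P_η)` is a net of norm-`≤ 1` operators converging strongly to the
identity and `m_η := P_η ∘ m`, then every `f ∈ L¹(m)` is `m_η`-integrable and
`‖f‖_{L¹(m_η)} → ‖f‖_{L¹(m)}`. -/
theorem stmt7 {Ω X : Type*} [MeasurableSpace Ω] [NormedAddCommGroup X] [NormedSpace ℝ X]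
    [CompleteSpace X]
    {Λ : Type*} [SemilatticeSup Λ] [Nonempty Λ]
    (m : VectorMeasure Ω X)
    (P : Λ → (X →L[ℝ] X))
    (hnorm : ∀ η : Λ, ‖P η‖ ≤ 1)
    (hconv : ∀ x : X, Tendsto (fun η : Λ => P η x) atTop (nhds x)) :
    ∀ f : Ω → ℝ, MemL1 m f →
      (∀ η : Λ, MemL1 (compVM (P η) m) f) ∧
      Tendsto (fun η : Λ => l1norm (compVM (P η) m) f) atTop (nhds (l1norm m f)) := by
  intro f hf
  have part1 : ∀ η : Λ, MemL1 (compVM (P η) m) f := by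
    intro η y
    rw [scal_compVM]
    exact hf _
  refine ⟨part1, ?_⟩
  -- the scalar "norm" functional
  set F : (X →L[ℝ] ℝ) → ℝ := fun y => ∫ ω, |f ω| ∂(scal m y).totalVariation with hFdef
  -- Banach–Steinhaus: uniform bound on the elementary integrals dominated by |f|
  obtain ⟨C, hC⟩ : ∃ C : ℝ, ∀ s : {s : SimpleFunc Ω ℝ // ∀ ω, |s ω| ≤ |f ω|},
      ‖(NormedSpace.inclusionInDoubleDual ℝ X) (vmint m s.1)‖ ≤ C := by
    apply banach_steinhaus
    intro y
    exact ⟨F y, fun s => by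
      rw [NormedSpace.dual_def, Real.norm_eq_abs]
      exact vmint_abs_le m y (hf y) s.1 s.2⟩
  have hCbound : ∀ (y : X →L[ℝ] ℝ), ‖y‖ ≤ 1 →
      ∀ s : SimpleFunc Ω ℝ, (∀ ω, |s ω| ≤ |f ω|) → |y (vmint m s)| ≤ C := by
    intro y hy s hs
    have h1 : ‖(NormedSpace.inclusionInDoubleDual ℝ X) (vmint m s) y‖
        ≤ ‖(NormedSpace.inclusionInDoubleDual ℝ X) (vmint m s)‖ * ‖y‖ :=
      ContinuousLinearMap.le_opNorm _ _
    have h2 := hC ⟨s, hs⟩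
    rw [NormedSpace.dual_def, Real.norm_eq_abs] at h1
    calc |y (vmint m s)| ≤ ‖(NormedSpace.inclusionInDoubleDual ℝ X) (vmint m s)‖ * ‖y‖ := h1
      _ ≤ C * 1 := by
          refine mul_le_mul h2 hy (norm_nonneg _) ?_
          exact le_trans (ContinuousLinearMap.opNorm_nonneg _) h2
      _ = C := mul_one C
  -- F is bounded by C on the unit ball
  have hFle : ∀ y : X →L[ℝ] ℝ, ‖y‖ ≤ 1 → F y ≤ C := by
    intro y hy
    by_contra hcon
    push_neg at hcon
    obtain ⟨s, hs, hlt⟩ := vmint_approx m y (hf y) (sub_pos.mpr hcon)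
    have h1 := hCbound y hy s hs
    have h2 : C < y (vmint m s) := by
      have : F y - (F y - C) = C := by ring
      rw [← this]
      exact hlt
    have := le_abs_self (y (vmint m s))
    linarith
  have hne : Nonempty {x : X →L[ℝ] ℝ // ‖x‖ ≤ 1} := ⟨⟨0, by simp⟩⟩
  -- composed functionals stay in the unit ball
  have hcompnorm : ∀ (η : Λ) (y : X →L[ℝ] ℝ), ‖y‖ ≤ 1 → ‖y.comp (P η)‖ ≤ 1 := by
    intro η y hy
    calc ‖y.comp (P η)‖ ≤ ‖y‖ * ‖P η‖ := ContinuousLinearMap.opNorm_comp_le _ _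
      _ ≤ 1 := mul_le_one₀ hy (norm_nonneg _) (hnorm η)
  -- rewrite the η-th norm
  have hl1eta : ∀ η : Λ, l1norm (compVM (P η) m) f
      = ⨆ x : {x : X →L[ℝ] ℝ // ‖x‖ ≤ 1}, F (x.1.comp (P η)) := by
    intro η
    rw [l1norm]
    refine iSup_congr fun x => ?_
    rw [scal_compVM]
  have hbddm : BddAbove (Set.range fun x : {x : X →L[ℝ] ℝ // ‖x‖ ≤ 1} => F x.1) := by
    refine ⟨C, ?_⟩
    rintro r ⟨x, rfl⟩
    exact hFle x.1 x.2
  have hbddeta : ∀ η : Λ, BddAbove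
      (Set.range fun x : {x : X →L[ℝ] ℝ // ‖x‖ ≤ 1} => F (x.1.comp (P η))) := by
    intro η
    refine ⟨C, ?_⟩
    rintro r ⟨x, rfl⟩
    exact hFle _ (hcompnorm η x.1 x.2)
  have hLdef : l1norm m f = ⨆ x : {x : X →L[ℝ] ℝ // ‖x‖ ≤ 1}, F x.1 := rfl
  -- upper bound
  have hupper : ∀ η : Λ, l1norm (compVM (P η) m) f ≤ l1norm m f := by
    intro η
    rw [hl1eta η]
    refine ciSup_le fun x => ?_
    rw [hLdef]
    exact le_ciSup hbddm (⟨x.1.comp (P η), hcompnorm η x.1 x.2⟩ :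
      {x : X →L[ℝ] ℝ // ‖x‖ ≤ 1})
  -- lower bound
  have hlower : ∀ ε : ℝ, 0 < ε →
      ∀ᶠ η in atTop, l1norm m f - ε < l1norm (compVM (P η) m) f := by
    intro ε hε
    have hε3 : 0 < ε / 3 := by linarith
    obtain ⟨y₀, hy₀⟩ : ∃ y₀ : {x : X →L[ℝ] ℝ // ‖x‖ ≤ 1}, l1norm m f - ε / 3 < F y₀.1 := by
      apply exists_lt_of_lt_ciSup
      rw [← hLdef]
      linarith [hε3]
    obtain ⟨s, hs, hslt⟩ := vmint_approx m y₀.1 (hf y₀.1) hε3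
    set v : X := vmint m s with hv
    have hvconv : ∀ᶠ η in atTop, P η v ∈ Metric.ball v (ε / 3) :=
      (hconv v).eventually (Metric.ball_mem_nhds v hε3)
    filter_upwards [hvconv] with η hη
    have hdist : ‖P η v - v‖ < ε / 3 := by
      rw [← dist_eq_norm]
      exact Metric.mem_ball.mp hη
    set z : X →L[ℝ] ℝ := y₀.1.comp (P η) with hz
    have hzv : z v = y₀.1 (P η v) := rfl
    have h1 : y₀.1 v - ε / 3 < z v := by
      rw [hzv]
      have : |y₀.1 (P η v) - y₀.1 v| ≤ ‖P η v - v‖ := by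
        rw [← map_sub]
        calc |y₀.1 (P η v - v)| = ‖y₀.1 (P η v - v)‖ := (Real.norm_eq_abs _).symm
          _ ≤ ‖y₀.1‖ * ‖P η v - v‖ := ContinuousLinearMap.le_opNorm _ _
          _ ≤ 1 * ‖P η v - v‖ := by
              exact mul_le_mul_of_nonneg_right y₀.2 (norm_nonneg _)
          _ = ‖P η v - v‖ := one_mul _
      have := abs_lt.mp (lt_of_le_of_lt this hdist)
      linarith [this.1]
    have h2 : z v ≤ F z := by
      have := vmint_abs_le m z (hf z) s hs
      exact le_trans (le_abs_self _) this
    have h3 : F z ≤ l1norm (compVM (P η) m) f := by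
      rw [hl1eta η]
      exact le_ciSup (hbddeta η) y₀
    have h4 : F y₀.1 - ε / 3 < y₀.1 v := hslt
    calc l1norm m f - ε
        < (F y₀.1 - ε / 3) - ε / 3 := by linarith [hy₀]
      _ < y₀.1 v - ε / 3 := by linarith [h4]
      _ < z v := h1
      _ ≤ F z := h2
      _ ≤ l1norm (compVM (P η) m) f := h3
  -- conclude
  rw [Metric.tendsto_nhds]
  intro ε hε
  filter_upwards [hlower ε hε] with η hη
  rw [Real.dist_eq, abs_sub_lt_iff]
  constructor
  · have := hupper η
    linarith
  · linarith
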